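/- (Proposition 1, Conclusion A) Suppose (q_l, q_r) : [0,∞) → ℝⁿ × ℝⁿ is a twice continuously differentiable solution of the closed-loop equations M_i(q_i) q̈_i + C_i(q_i, q̇_i) q̇_i = f_i(t) − K_s ⌈q_i − q_j⌋^{p_U} − D_{si} ⌈q̇_i⌋^{p_F} for (i,j) ∈ {(l,r),(r,l)}, where the external forces f_i : [0,∞) → ℝⁿ are continuous and satisfy the passivity assumption A1 along the solution. Then the position error q_l − q_r and the velocities q̇_l, q̇_r are bounded on [0,∞). -/

import Mathlib

open Matrix intervalIntegral

/-- Signed power function: `⌈x⌋^p = |x|^p · sign(x)` with `sign 0 = 0`. -/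
noncomputable def spow (p x : ℝ) : ℝ := |x| ^ p * Real.sign x


lemma spow_neg (p x : ℝ) : spow p (-x) = -spow p x := by
  simp only [spow, abs_neg, Real.sign_neg, mul_neg]

lemma mul_spow_nonneg (p x : ℝ) : 0 ≤ x * spow p x := by
  have h : x * spow p x = |x| ^ p * (Real.sign x * x) := by unfold spow; ring
  rw [h]
  exact mul_nonneg (Real.rpow_nonneg (abs_nonneg x) p) (Real.sign_mul_nonneg x)

lemma spow_hasDeriv_aux {p : ℝ} (hp : 0 < p) (x : ℝ) :
    HasDerivAt (fun y => |y| ^ (p + 1)) ((p + 1) * spow p x) x := by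
  rcases lt_trichotomy x 0 with hx | hx | hx
  · have h1 : HasDerivAt (fun y : ℝ => (-y) ^ (p + 1)) ((p+1) * (-x) ^ p * (-1)) x := by
      have h0 : HasDerivAt (fun y : ℝ => -y) (-1) x := (hasDerivAt_neg x)
      have h2 : HasDerivAt (fun z : ℝ => z ^ (p + 1)) ((p + 1) * (-x) ^ (p + 1 - 1)) (-x) :=
        Real.hasDerivAt_rpow_const (Or.inl (by linarith))
      simpa [add_sub_cancel_right, Function.comp_def] using h2.comp x h0
    have heq : (fun y : ℝ => |y| ^ (p+1)) =ᶠ[nhds x] (fun y : ℝ => (-y) ^ (p + 1)) := by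
      filter_upwards [eventually_lt_nhds hx] with y hy
      rw [abs_of_neg hy]
    have := h1.congr_of_eventuallyEq heq
    refine this.congr_deriv ?_
    rw [spow, abs_of_neg hx, Real.sign_of_neg hx]; ring
  · subst hx
    have hs : spow p 0 = 0 := by simp [spow]
    rw [hs, mul_zero]
    rw [hasDerivAt_iff_tendsto_slope]
    apply squeeze_zero_norm' (a := fun y => |y| ^ p)
    · filter_upwards [self_mem_nhdsWithin] with y (hy : y ≠ 0)
      have hy' : (0:ℝ) < |y| := abs_pos.mpr hy
      rw [slope_def_field, Real.norm_eq_abs, abs_div]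
      simp only [sub_zero, abs_zero, Real.zero_rpow (by linarith : p + 1 ≠ 0), abs_abs]
      rw [abs_of_nonneg (Real.rpow_nonneg (abs_nonneg y) _), Real.rpow_add hy', Real.rpow_one,
        mul_div_assoc, div_self hy'.ne', mul_one]
    · have : Filter.Tendsto (fun y : ℝ => |y| ^ p) (nhds 0) (nhds 0) := by
        have hc : ContinuousAt (fun y : ℝ => |y| ^ p) 0 := by
          apply ContinuousAt.rpow_const continuous_abs.continuousAt (Or.inr hp.le)
        simpa [Real.zero_rpow hp.ne'] using hc.tendsto
      exact this.mono_left nhdsWithin_le_nhds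
  · have h1 : HasDerivAt (fun y : ℝ => y ^ (p + 1)) ((p + 1) * x ^ (p + 1 - 1)) x :=
      Real.hasDerivAt_rpow_const (Or.inl hx.ne')
    have heq : (fun y : ℝ => |y| ^ (p+1)) =ᶠ[nhds x] (fun y : ℝ => y ^ (p + 1)) := by
      filter_upwards [eventually_gt_nhds hx] with y hy
      rw [abs_of_pos hy]
    have := h1.congr_of_eventuallyEq heq
    refine this.congr_deriv ?_
    rw [spow, abs_of_pos hx, Real.sign_of_pos hx, add_sub_cancel_right]; ring

lemma dot_skew_zero {n : ℕ} (S : Matrix (Fin n) (Fin n) ℝ)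
    (h : ∀ a b, S a b = -S b a) (v : Fin n → ℝ) :
    ∑ a, ∑ b, v a * (S a b * v b) = 0 := by
  have h2 : (∑ a, ∑ b, v a * (S a b * v b)) = -∑ a, ∑ b, v a * (S a b * v b) := by
    calc (∑ a, ∑ b, v a * (S a b * v b)) = ∑ a, ∑ b, v b * (S b a * v a) := by
          rw [Finset.sum_comm]
      _ = ∑ a, ∑ b, -(v a * (S a b * v b)) := by
          apply Finset.sum_congr rfl; intro a _; apply Finset.sum_congr rfl; intro b _
          rw [h b a]; ring
      _ = -∑ a, ∑ b, v a * (S a b * v b) := by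
          simp [Finset.sum_neg_distrib]
  linarith

lemma clm_pi_expand {n : ℕ} (L : (Fin n → ℝ) →L[ℝ] ℝ) (v : Fin n → ℝ) :
    L v = ∑ k, v k * L (Pi.single k 1) := by
  have hv : v = ∑ k, (v k) • (Pi.single k 1 : Fin n → ℝ) := by
    have := Finset.univ_sum_single v
    rw [← this]
    apply Finset.sum_congr rfl; intro k _
    ext j
    by_cases hkj : k = j <;> simp [Pi.single_apply, hkj]
  conv_lhs => rw [hv]
  rw [map_sum]
  simp [smul_eq_mul]
open Matrix

lemma comp_deriv {n : ℕ} (f : (Fin n → ℝ) → ℝ) (hf : ContDiff ℝ 1 f)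
    (q : ℝ → Fin n → ℝ) (vt : Fin n → ℝ) (t : ℝ) (hq : HasDerivAt q vt t) :
    HasDerivAt (fun s => f (q s)) (fderiv ℝ f (q t) vt) t :=
  (((hf.differentiable one_ne_zero) (q t)).hasFDerivAt).comp_hasDerivAt t hq

lemma apply_deriv {n : ℕ} (q : ℝ → Fin n → ℝ) (vt : Fin n → ℝ) (t : ℝ)
    (hq : HasDerivAt q vt t) (k : Fin n) :
    HasDerivAt (fun s => q s k) (vt k) t := by
  have := ((ContinuousLinearMap.proj k : (Fin n → ℝ) →L[ℝ] ℝ).hasFDerivAt).comp_hasDerivAt t hq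
  exact this

lemma quad_deriv_raw {n : ℕ} (M : (Fin n → ℝ) → Matrix (Fin n) (Fin n) ℝ)
    (hMdiff : ∀ a b, ContDiff ℝ 1 fun q => M q a b)
    (q v : ℝ → Fin n → ℝ) (av : Fin n → ℝ) (t : ℝ)
    (hq : HasDerivAt q (v t) t) (hv : HasDerivAt v av t) :
    HasDerivAt (fun s => v s ⬝ᵥ (M (q s) *ᵥ v s))
      (∑ a, (av a * (∑ b, M (q t) a b * v t b) +
        v t a * (∑ b, (fderiv ℝ (fun q' => M q' a b) (q t) (v t) * v t b
          + M (q t) a b * av b)))) t := by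
  have key : HasDerivAt (fun s => ∑ a, v s a * ∑ b, M (q s) a b * v s b)
      (∑ a, (av a * (∑ b, M (q t) a b * v t b) +
        v t a * (∑ b, (fderiv ℝ (fun q' => M q' a b) (q t) (v t) * v t b
          + M (q t) a b * av b)))) t := by
    apply HasDerivAt.fun_sum
    intro a _
    exact (apply_deriv v av t hv a).mul <| HasDerivAt.fun_sum fun b _ =>
      (comp_deriv _ (hMdiff a b) q (v t) t hq).mul (apply_deriv v av t hv b)
  have heq : (fun s => v s ⬝ᵥ (M (q s) *ᵥ v s)) = fun s => ∑ a, v s a * ∑ b, M (q s) a b * v s b := by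
    funext s; simp [dotProduct, Matrix.mulVec]
  rw [heq]; exact key

lemma quad_deriv {n : ℕ} (M : (Fin n → ℝ) → Matrix (Fin n) (Fin n) ℝ)
    (C : (Fin n → ℝ) → (Fin n → ℝ) → Matrix (Fin n) (Fin n) ℝ)
    (hMdiff : ∀ a b, ContDiff ℝ 1 fun q => M q a b)
    (hMsymm : ∀ q, (M q)ᵀ = M q)
    (hP3 : ∀ q v : Fin n → ℝ, ∀ a b : Fin n,
      ((∑ k, v k * fderiv ℝ (fun q' => M q' a b) q (Pi.single k 1)) - 2 * C q v a b)
        = -((∑ k, v k * fderiv ℝ (fun q' => M q' b a) q (Pi.single k 1)) - 2 * C q v b a))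
    (q v : ℝ → Fin n → ℝ) (av : Fin n → ℝ) (t : ℝ)
    (hq : HasDerivAt q (v t) t) (hv : HasDerivAt v av t) :
    HasDerivAt (fun s => v s ⬝ᵥ (M (q s) *ᵥ v s))
      (2 * (v t ⬝ᵥ (M (q t) *ᵥ av + C (q t) (v t) *ᵥ v t))) t := by
  have raw := quad_deriv_raw M hMdiff q v av t hq hv
  convert raw using 1
  set Q := q t
  set V := v t
  have hsym : ∀ a b, M Q b a = M Q a b := by
    intro a b
    calc M Q b a = (M Q)ᵀ a b := (Matrix.transpose_apply (M Q) a b).symm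
      _ = M Q a b := by rw [hMsymm Q]
  have hMd : ∀ a b : Fin n, fderiv ℝ (fun q' => M q' a b) Q V
      = ∑ k, V k * fderiv ℝ (fun q' => M q' a b) Q (Pi.single k 1) := by
    intro a b; exact clm_pi_expand _ V
  set S : Matrix (Fin n) (Fin n) ℝ :=
    fun a b => (∑ k, V k * fderiv ℝ (fun q' => M q' a b) Q (Pi.single k 1)) - 2 * C Q V a b
    with hS
  have hskew : ∑ a, ∑ b, V a * (S a b * V b) = 0 := by
    apply dot_skew_zero S _ V
    intro a b; simp only [hS]; exact hP3 Q V a b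
  have hB : ∑ a, ∑ b, V a * (fderiv ℝ (fun q' => M q' a b) Q V * V b)
      = 2 * ∑ a, ∑ b, V a * (C Q V a b * V b) := by
    have expand : ∑ a, ∑ b, V a * (S a b * V b)
        = ∑ a, ∑ b, V a * (fderiv ℝ (fun q' => M q' a b) Q V * V b)
          - 2 * ∑ a, ∑ b, V a * (C Q V a b * V b) := by
      rw [Finset.mul_sum, ← Finset.sum_sub_distrib]
      apply Finset.sum_congr rfl; intro a _
      rw [Finset.mul_sum, ← Finset.sum_sub_distrib]
      apply Finset.sum_congr rfl; intro b _
      rw [hMd a b]; simp only [hS]; ring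
    rw [expand] at hskew; linarith
  have hA : ∑ a, av a * (∑ b, M Q a b * V b) = ∑ a, V a * ∑ b, M Q a b * av b := by
    calc ∑ a, av a * (∑ b, M Q a b * V b) = ∑ a, ∑ b, av a * (M Q a b * V b) := by
          simp [Finset.mul_sum]
      _ = ∑ b, ∑ a, av a * (M Q a b * V b) := Finset.sum_comm
      _ = ∑ a, V a * ∑ b, M Q a b * av b := by
          simp only [Finset.mul_sum]
          apply Finset.sum_congr rfl; intro a _
          apply Finset.sum_congr rfl; intro b _
          rw [hsym a b]; ring
  have lhs_eq : 2 * (V ⬝ᵥ (M Q *ᵥ av + C Q V *ᵥ V))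
      = 2 * ((∑ a, V a * ∑ b, M Q a b * av b) + ∑ a, ∑ b, V a * (C Q V a b * V b)) := by
    simp [dotProduct, Matrix.mulVec, Finset.mul_sum, mul_add, Finset.sum_add_distrib]
  have rhs_eq : (∑ a, (av a * (∑ b, M Q a b * V b) +
        V a * (∑ b, (fderiv ℝ (fun q' => M q' a b) Q V * V b + M Q a b * av b))))
      = (∑ a, av a * (∑ b, M Q a b * V b))
        + ((∑ a, ∑ b, V a * (fderiv ℝ (fun q' => M q' a b) Q V * V b))
          + (∑ a, ∑ b, V a * (M Q a b * av b))) := by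
    rw [← Finset.sum_add_distrib, ← Finset.sum_add_distrib]
    apply Finset.sum_congr rfl; intro a _
    congr 1
    rw [Finset.mul_sum, ← Finset.sum_add_distrib]
    exact Finset.sum_congr rfl fun b _ => mul_add _ _ _
  rw [lhs_eq, rhs_eq, hA, hB]
  have hc : ∑ a, ∑ b, V a * (M Q a b * av b) = ∑ a, V a * ∑ b, M Q a b * av b := by
    simp [Finset.mul_sum]
  rw [hc]; ring

lemma hasDerivAt_psi {p : ℝ} (hp : 0 < p) (x : ℝ) :
    HasDerivAt (fun y => |y| ^ (p + 1) / (p + 1)) (spow p x) x := by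
  have h := (spow_hasDeriv_aux hp x).div_const (p + 1)
  have hne : p + 1 ≠ 0 := by linarith
  simpa [mul_div_assoc, mul_comm, div_self hne] using h

lemma dot_self_nonneg' {n : ℕ} (v : Fin n → ℝ) : 0 ≤ v ⬝ᵥ v :=
  Finset.sum_nonneg fun k _ => mul_self_nonneg (v k)

/-- Proposition 1, Conclusion A: boundedness of the position error and the
velocities for the state-feedback P+d controller C1 under passive external forces. -/
theorem stmt7 (n : ℕ)
    (Ml Mr : (Fin n → ℝ) → Matrix (Fin n) (Fin n) ℝ)
    (Cl Cr : (Fin n → ℝ) → (Fin n → ℝ) → Matrix (Fin n) (Fin n) ℝ)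
    -- Assumption A2
    (m1 m2 : ℝ) (hm1 : 0 < m1) (hm12 : m1 ≤ m2)
    (hMl_diff : ∀ a b : Fin n, ContDiff ℝ 1 fun q => Ml q a b)
    (hMr_diff : ∀ a b : Fin n, ContDiff ℝ 1 fun q => Mr q a b)
    (hMl_symm : ∀ q, (Ml q)ᵀ = Ml q) (hMr_symm : ∀ q, (Mr q)ᵀ = Mr q)
    (hMl_bnd : ∀ q x : Fin n → ℝ,
      m1 * (x ⬝ᵥ x) ≤ x ⬝ᵥ (Ml q *ᵥ x) ∧ x ⬝ᵥ (Ml q *ᵥ x) ≤ m2 * (x ⬝ᵥ x))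
    (hMr_bnd : ∀ q x : Fin n → ℝ,
      m1 * (x ⬝ᵥ x) ≤ x ⬝ᵥ (Mr q *ᵥ x) ∧ x ⬝ᵥ (Mr q *ᵥ x) ≤ m2 * (x ⬝ᵥ x))
    (hCl_cont : Continuous fun p : (Fin n → ℝ) × (Fin n → ℝ) => Cl p.1 p.2)
    (hCr_cont : Continuous fun p : (Fin n → ℝ) × (Fin n → ℝ) => Cr p.1 p.2)
    -- Property P3
    (hP3l : ∀ q v : Fin n → ℝ, ∀ a b : Fin n,
      ((∑ k, v k * fderiv ℝ (fun q' => Ml q' a b) q (Pi.single k 1)) - 2 * Cl q v a b)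
        = -((∑ k, v k * fderiv ℝ (fun q' => Ml q' b a) q (Pi.single k 1)) - 2 * Cl q v b a))
    (hP3r : ∀ q v : Fin n → ℝ, ∀ a b : Fin n,
      ((∑ k, v k * fderiv ℝ (fun q' => Mr q' a b) q (Pi.single k 1)) - 2 * Cr q v a b)
        = -((∑ k, v k * fderiv ℝ (fun q' => Mr q' b a) q (Pi.single k 1)) - 2 * Cr q v b a))
    -- homogeneity weights and control gains
    (r1 r2 : ℝ) (hr2 : 0 < r2) (hr12 : r2 < r1) (hr1 : r1 < 2 * r2)
    (pU pF : ℝ) (hpU : pU = (2 * r2 - r1) / r1) (hpF : pF = (2 * r2 - r1) / r2)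
    (Ks Dsl Dsr : ℝ) (hKs : 0 < Ks) (hDsl : 0 < Dsl) (hDsr : 0 < Dsr)
    -- a twice continuously differentiable solution on [0,∞)
    (ql qr vl vr al ar : ℝ → (Fin n → ℝ))
    (hql : ∀ t : ℝ, 0 ≤ t → HasDerivAt ql (vl t) t)
    (hqr : ∀ t : ℝ, 0 ≤ t → HasDerivAt qr (vr t) t)
    (hvl : ∀ t : ℝ, 0 ≤ t → HasDerivAt vl (al t) t)
    (hvr : ∀ t : ℝ, 0 ≤ t → HasDerivAt vr (ar t) t)
    (hal : ContinuousOn al (Set.Ici 0)) (har : ContinuousOn ar (Set.Ici 0))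
    -- continuous external forces satisfying Assumption A1 along the solution
    (fl fr : ℝ → (Fin n → ℝ)) (hfl : Continuous fl) (hfr : Continuous fr)
    (κl κr : ℝ) (hκl : 0 < κl) (hκr : 0 < κr)
    (hA1l : ∀ t : ℝ, 0 ≤ t → (∫ σ in (0:ℝ)..t, vl σ ⬝ᵥ fl σ) ≤ κl)
    (hA1r : ∀ t : ℝ, 0 ≤ t → (∫ σ in (0:ℝ)..t, vr σ ⬝ᵥ fr σ) ≤ κr)
    -- the closed-loop equations
    (heql : ∀ t : ℝ, 0 ≤ t →
      Ml (ql t) *ᵥ al t + Cl (ql t) (vl t) *ᵥ vl t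
        = fun k => fl t k - Ks * spow pU (ql t k - qr t k) - Dsl * spow pF (vl t k))
    (heqr : ∀ t : ℝ, 0 ≤ t →
      Mr (qr t) *ᵥ ar t + Cr (qr t) (vr t) *ᵥ vr t
        = fun k => fr t k - Ks * spow pU (qr t k - ql t k) - Dsr * spow pF (vr t k)) :
    ∃ B : ℝ, ∀ t : ℝ, 0 ≤ t →
      ‖ql t - qr t‖ ≤ B ∧ ‖vl t‖ ≤ B ∧ ‖vr t‖ ≤ B := by
  -- basic positivity
  have hr10 : 0 < r1 := lt_trans hr2 hr12
  have hpU0 : 0 < pU := by rw [hpU]; exact div_pos (by linarith) hr10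
  have hpU1 : 0 < pU + 1 := by linarith
  -- abbreviations
  set Ql : ℝ → ℝ := fun s => vl s ⬝ᵥ (Ml (ql s) *ᵥ vl s) with hQl
  set Qr : ℝ → ℝ := fun s => vr s ⬝ᵥ (Mr (qr s) *ᵥ vr s) with hQr
  set Φ : ℝ → ℝ := fun s => ∑ k, |ql s k - qr s k| ^ (pU + 1) / (pU + 1) with hΦ
  set gl : ℝ → ℝ := fun σ => vl (max σ 0) ⬝ᵥ fl (max σ 0) with hgl
  set gr : ℝ → ℝ := fun σ => vr (max σ 0) ⬝ᵥ fr (max σ 0) with hgr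
  -- continuity of the regularized integrands
  have hmax : Continuous fun σ : ℝ => max σ 0 := continuous_id.max continuous_const
  have hmem : ∀ σ : ℝ, max σ 0 ∈ Set.Ici (0:ℝ) := fun σ => le_max_right σ 0
  have hvlc : ContinuousOn vl (Set.Ici 0) := fun s hs => ((hvl s hs).continuousAt).continuousWithinAt
  have hvrc : ContinuousOn vr (Set.Ici 0) := fun s hs => ((hvr s hs).continuousAt).continuousWithinAt
  have hvlm : Continuous fun σ => vl (max σ 0) := hvlc.comp_continuous hmax hmem
  have hvrm : Continuous fun σ => vr (max σ 0) := hvrc.comp_continuous hmax hmem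
  have hglc : Continuous gl := by
    rw [hgl]
    have : (fun σ => vl (max σ 0) ⬝ᵥ fl (max σ 0))
        = fun σ => ∑ k, vl (max σ 0) k * fl (max σ 0) k := rfl
    rw [this]
    exact continuous_finset_sum _ fun k _ =>
      ((continuous_apply k).comp hvlm).mul ((continuous_apply k).comp (hfl.comp hmax))
  have hgrc : Continuous gr := by
    rw [hgr]
    have : (fun σ => vr (max σ 0) ⬝ᵥ fr (max σ 0))
        = fun σ => ∑ k, vr (max σ 0) k * fr (max σ 0) k := rfl
    rw [this]
    exact continuous_finset_sum _ fun k _ =>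
      ((continuous_apply k).comp hvrm).mul ((continuous_apply k).comp (hfr.comp hmax))
  set Fl : ℝ → ℝ := fun s => ∫ σ in (0:ℝ)..s, gl σ with hFl
  set Fr : ℝ → ℝ := fun s => ∫ σ in (0:ℝ)..s, gr σ with hFr
  set E : ℝ → ℝ := fun s => 2⁻¹ * Ql s + 2⁻¹ * Qr s + Ks * Φ s - Fl s - Fr s with hE
  -- the derivative of the energy
  have hE' : ∀ t : ℝ, 0 ≤ t → HasDerivAt E
      (-(Dsl * ∑ k, vl t k * spow pF (vl t k)) - Dsr * ∑ k, vr t k * spow pF (vr t k)) t := by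
    intro t ht
    have hQl' : HasDerivAt Ql (2 * (vl t ⬝ᵥ (Ml (ql t) *ᵥ al t + Cl (ql t) (vl t) *ᵥ vl t))) t :=
      quad_deriv Ml Cl hMl_diff hMl_symm hP3l ql vl (al t) t (hql t ht) (hvl t ht)
    have hQr' : HasDerivAt Qr (2 * (vr t ⬝ᵥ (Mr (qr t) *ᵥ ar t + Cr (qr t) (vr t) *ᵥ vr t))) t :=
      quad_deriv Mr Cr hMr_diff hMr_symm hP3r qr vr (ar t) t (hqr t ht) (hvr t ht)
    have hΦ' : HasDerivAt Φ (∑ k, spow pU (ql t k - qr t k) * (vl t k - vr t k)) t := by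
      apply HasDerivAt.fun_sum
      intro k _
      have hek : HasDerivAt (fun s => ql s k - qr s k) (vl t k - vr t k) t :=
        (apply_deriv ql (vl t) t (hql t ht) k).sub (apply_deriv qr (vr t) t (hqr t ht) k)
      have hψ := hasDerivAt_psi hpU0 (ql t k - qr t k)
      simpa [Function.comp_def] using hψ.comp t hek
    have hFl' : HasDerivAt Fl (gl t) t := (hglc.integral_hasStrictDerivAt 0 t).hasDerivAt
    have hFr' : HasDerivAt Fr (gr t) t := (hgrc.integral_hasStrictDerivAt 0 t).hasDerivAt
    have hraw := ((((hQl'.const_mul (2⁻¹ : ℝ)).add (hQr'.const_mul (2⁻¹ : ℝ))).add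
      (hΦ'.const_mul Ks)).sub hFl').sub hFr'
    refine hraw.congr_deriv ?_
    -- algebraic identification of the derivative
    have h1 : vl t ⬝ᵥ (Ml (ql t) *ᵥ al t + Cl (ql t) (vl t) *ᵥ vl t)
        = (∑ k, vl t k * fl t k) - Ks * (∑ k, vl t k * spow pU (ql t k - qr t k))
          - Dsl * (∑ k, vl t k * spow pF (vl t k)) := by
      rw [heql t ht]
      show (∑ k, vl t k * _) = _
      rw [Finset.mul_sum, Finset.mul_sum, ← Finset.sum_sub_distrib, ← Finset.sum_sub_distrib]
      exact Finset.sum_congr rfl fun k _ => by ring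
    have h2 : vr t ⬝ᵥ (Mr (qr t) *ᵥ ar t + Cr (qr t) (vr t) *ᵥ vr t)
        = (∑ k, vr t k * fr t k) + Ks * (∑ k, vr t k * spow pU (ql t k - qr t k))
          - Dsr * (∑ k, vr t k * spow pF (vr t k)) := by
      rw [heqr t ht]
      show (∑ k, vr t k * _) = _
      rw [Finset.mul_sum, Finset.mul_sum, ← Finset.sum_add_distrib, ← Finset.sum_sub_distrib]
      apply Finset.sum_congr rfl
      intro k _
      have hneg : qr t k - ql t k = -(ql t k - qr t k) := by ring
      rw [hneg, spow_neg]; ring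
    have h3 : (∑ k, spow pU (ql t k - qr t k) * (vl t k - vr t k))
        = (∑ k, vl t k * spow pU (ql t k - qr t k))
          - (∑ k, vr t k * spow pU (ql t k - qr t k)) := by
      rw [← Finset.sum_sub_distrib]
      exact Finset.sum_congr rfl fun k _ => by ring
    have h4 : gl t = ∑ k, vl t k * fl t k := by
      rw [hgl]; simp only [max_eq_left ht]; rfl
    have h5 : gr t = ∑ k, vr t k * fr t k := by
      rw [hgr]; simp only [max_eq_left ht]; rfl
    rw [h1, h2, h3, h4, h5]
    ring
  -- E is antitone on [0,∞)
  have hEanti : AntitoneOn E (Set.Ici 0) := by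
    apply antitoneOn_of_deriv_nonpos (convex_Ici 0)
    · exact fun s hs => ((hE' s hs).continuousAt).continuousWithinAt
    · intro s hs
      rw [interior_Ici] at hs
      exact ((hE' s (le_of_lt hs)).differentiableAt).differentiableWithinAt
    · intro s hs
      rw [interior_Ici] at hs
      rw [(hE' s (le_of_lt hs)).deriv]
      have hl0 : 0 ≤ ∑ k, vl s k * spow pF (vl s k) :=
        Finset.sum_nonneg fun k _ => mul_spow_nonneg _ _
      have hr0 : 0 ≤ ∑ k, vr s k * spow pF (vr s k) :=
        Finset.sum_nonneg fun k _ => mul_spow_nonneg _ _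
      nlinarith [mul_nonneg hDsl.le hl0, mul_nonneg hDsr.le hr0]
  -- nonnegativity facts
  have hΦ0 : ∀ s : ℝ, 0 ≤ Φ s := by
    intro s
    apply Finset.sum_nonneg
    intro k _
    positivity
  have hQl0 : ∀ s : ℝ, 0 ≤ Ql s := fun s =>
    le_trans (mul_nonneg hm1.le (dot_self_nonneg' (vl s))) ((hMl_bnd (ql s) (vl s)).1)
  have hQr0 : ∀ s : ℝ, 0 ≤ Qr s := fun s =>
    le_trans (mul_nonneg hm1.le (dot_self_nonneg' (vr s))) ((hMr_bnd (qr s) (vr s)).1)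
  -- integral bounds
  have hFlb : ∀ t : ℝ, 0 ≤ t → Fl t ≤ κl := by
    intro t ht
    have : Fl t = ∫ σ in (0:ℝ)..t, vl σ ⬝ᵥ fl σ := by
      rw [hFl]
      apply intervalIntegral.integral_congr
      intro σ hσ
      rw [Set.uIcc_of_le ht] at hσ
      simp only [hgl, max_eq_left hσ.1]
    rw [this]; exact hA1l t ht
  have hFrb : ∀ t : ℝ, 0 ≤ t → Fr t ≤ κr := by
    intro t ht
    have : Fr t = ∫ σ in (0:ℝ)..t, vr σ ⬝ᵥ fr σ := by
      rw [hFr]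
      apply intervalIntegral.integral_congr
      intro σ hσ
      rw [Set.uIcc_of_le ht] at hσ
      simp only [hgr, max_eq_left hσ.1]
    rw [this]; exact hA1r t ht
  -- the uniform bound
  set Ctot : ℝ := (2⁻¹ * Ql 0 + 2⁻¹ * Qr 0 + Ks * Φ 0) + κl + κr with hCtot
  have hCt0 : 0 < Ctot := by
    have h1 := hQl0 0
    have h2 := hQr0 0
    have h3 : 0 ≤ Ks * Φ 0 := mul_nonneg hKs.le (hΦ0 0)
    rw [hCtot]
    linarith
  have hkey : ∀ t : ℝ, 0 ≤ t →
      2⁻¹ * Ql t + 2⁻¹ * Qr t + Ks * Φ t ≤ Ctot := by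
    intro t ht
    have h := hEanti (Set.self_mem_Ici) ht ht
    have hFt := hFlb t ht
    have hFt' := hFrb t ht
    have hEt : E t = 2⁻¹ * Ql t + 2⁻¹ * Qr t + Ks * Φ t - Fl t - Fr t := rfl
    have hE0' : E 0 = 2⁻¹ * Ql 0 + 2⁻¹ * Qr 0 + Ks * Φ 0 - Fl 0 - Fr 0 := rfl
    have hFl0 : Fl 0 = 0 := intervalIntegral.integral_same
    have hFr0 : Fr 0 = 0 := intervalIntegral.integral_same
    rw [hEt, hE0', hFl0, hFr0] at h
    rw [hCtot]
    linarith
  -- individual bounds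
  have hvl_bnd : ∀ t : ℝ, 0 ≤ t → vl t ⬝ᵥ vl t ≤ 2 * Ctot / m1 := by
    intro t ht
    have h := hkey t ht
    have h1 : m1 * (vl t ⬝ᵥ vl t) ≤ Ql t := (hMl_bnd (ql t) (vl t)).1
    clear_value Ql Qr Φ Fl Fr E Ctot
    have h2 := hQr0 t
    have h3 : 0 ≤ Ks * Φ t := mul_nonneg hKs.le (hΦ0 t)
    rw [le_div_iff₀ hm1]
    nlinarith
  have hvr_bnd : ∀ t : ℝ, 0 ≤ t → vr t ⬝ᵥ vr t ≤ 2 * Ctot / m1 := by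
    intro t ht
    have h := hkey t ht
    have h1 : m1 * (vr t ⬝ᵥ vr t) ≤ Qr t := (hMr_bnd (qr t) (vr t)).1
    clear_value Ql Qr Φ Fl Fr E Ctot
    have h2 := hQl0 t
    have h3 : 0 ≤ Ks * Φ t := mul_nonneg hKs.le (hΦ0 t)
    rw [le_div_iff₀ hm1]
    nlinarith
  have hΦ_bnd : ∀ t : ℝ, 0 ≤ t → Φ t ≤ Ctot / Ks := by
    intro t ht
    have h := hkey t ht
    have h1 := hQl0 t
    have h2 := hQr0 t
    clear_value Ql Qr Φ Fl Fr E Ctot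
    rw [le_div_iff₀ hKs]
    nlinarith
  set Bv : ℝ := Real.sqrt (2 * Ctot / m1) with hBv
  set Be : ℝ := ((pU + 1) * (Ctot / Ks)) ^ (1 / (pU + 1)) with hBe
  refine ⟨max Bv Be, fun t ht => ?_⟩
  have hBv0 : 0 ≤ Bv := Real.sqrt_nonneg _
  have hBe0 : 0 ≤ Be := Real.rpow_nonneg
    (mul_nonneg hpU1.le (div_nonneg hCt0.le hKs.le)) _
  have hB0 : 0 ≤ max Bv Be := le_trans hBv0 (le_max_left _ _)
  refine ⟨?_, ?_, ?_⟩
  · -- position error bound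
    rw [pi_norm_le_iff_of_nonneg hB0]
    intro i
    refine le_trans ?_ (le_max_right Bv Be)
    have hterm : |ql t i - qr t i| ^ (pU + 1) / (pU + 1) ≤ Φ t := by
      apply Finset.single_le_sum (f := fun k => |ql t k - qr t k| ^ (pU + 1) / (pU + 1))
      · intro k _; positivity
      · exact Finset.mem_univ i
    have h2 : |ql t i - qr t i| ^ (pU + 1) ≤ (pU + 1) * (Ctot / Ks) := by
      have := le_trans hterm (hΦ_bnd t ht)
      rw [div_le_iff₀ hpU1] at this
      linarith [this]
    have h3 := Real.rpow_le_rpow (Real.rpow_nonneg (abs_nonneg _) _) h2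
      (le_of_lt (one_div_pos.mpr hpU1))
    rw [← Real.rpow_mul (abs_nonneg _)] at h3
    rw [mul_one_div_cancel hpU1.ne', Real.rpow_one] at h3
    rw [hBe]
    simpa [Real.norm_eq_abs] using h3
  · -- left velocity bound
    rw [pi_norm_le_iff_of_nonneg hB0]
    intro i
    refine le_trans ?_ (le_max_left Bv Be)
    have h1 : vl t i * vl t i ≤ vl t ⬝ᵥ vl t :=
      Finset.single_le_sum (f := fun k => vl t k * vl t k)
        (fun k _ => mul_self_nonneg _) (Finset.mem_univ i)
    have h2 : (vl t i) ^ 2 ≤ 2 * Ctot / m1 := by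
      rw [sq]; exact le_trans h1 (hvl_bnd t ht)
    calc ‖vl t i‖ = Real.sqrt ((vl t i) ^ 2) := by
          rw [Real.sqrt_sq_eq_abs, Real.norm_eq_abs]
      _ ≤ Bv := Real.sqrt_le_sqrt h2
  · -- right velocity bound
    rw [pi_norm_le_iff_of_nonneg hB0]
    intro i
    refine le_trans ?_ (le_max_left Bv Be)
    have h1 : vr t i * vr t i ≤ vr t ⬝ᵥ vr t :=
      Finset.single_le_sum (f := fun k => vr t k * vr t k)
        (fun k _ => mul_self_nonneg _) (Finset.mem_univ i)
    have h2 : (vr t i) ^ 2 ≤ 2 * Ctot / m1 := by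
      rw [sq]; exact le_trans h1 (hvr_bnd t ht)
    calc ‖vr t i‖ = Real.sqrt ((vr t i) ^ 2) := by
          rw [Real.sqrt_sq_eq_abs, Real.norm_eq_abs]
      _ ≤ Bv := Real.sqrt_le_sqrt h2
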